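/- Let F be a field, let μ, α ∈ F with μ ≠ 0 and α ≠ 0, and let x, u, v, y ∈ F with x ≠ u. Suppose α·(x−v)·(u−y) − (μ²/α)·(x−u)·(v−y) = 0 and μ·(x−u) + α·(u−y) = 0. Then α²·(x−v) + α·μ·(v−u) − μ²·(x−u) = 0. -/

import Mathlib

theorem stmt13 {F : Type*} [Field F] (μ α : F) (hμ : μ ≠ 0) (hα : α ≠ 0)
    (x u v y : F) (hxu : x ≠ u)
    (hQ : α*(x-v)*(u-y) - (μ^2/α)*(x-u)*(v-y) = 0)
    (hq : μ*(x-u) + α*(u-y) = 0) :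
    α^2*(x-v) + α*μ*(v-u) - μ^2*(x-u) = 0 := by
  have hy : y = u + μ*(x-u)/α := by
    field_simp
    linear_combination -hq
  subst hy
  field_simp at hQ
  have hxu' : x - u ≠ 0 := sub_ne_zero.mpr hxu
  have key : α*(μ*(x-u)) * (α^2*(x-v) + α*μ*(v-u) - μ^2*(x-u)) = 0 := by
    linear_combination -α * hQ
  rcases mul_eq_zero.mp key with h | h
  · exact absurd h (mul_ne_zero hα (mul_ne_zero hμ hxu'))
  · exact h
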